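/- Suppose Φ is (k,δ,ε)-StRIP and (k,δ,α,ε²)-WSINC with α = (1−δ)²/(8·log(2N/ε)) and g(δ,t) = exp(−(1−δ)²/(8t²)). For a k-subset I with Φ_I^T Φ_I invertible and a sign vector ζ ∈ {−1,+1}^I, define v(ζ,I) = Φ^T Φ_I (Φ_I^T Φ_I)^{−1} ζ, and let p(I) be the probability, over i.i.d. uniform signs ζ, that ‖v(ζ,I)_{I^c}‖_∞ > 1/2. Then a uniformly random k-subset I of {1,…,N} satisfies p(I) > ε with probability less than 3ε. -/

import Mathlib

open Finset Matrix

open scoped Classical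

noncomputable section

/-- The ℓ₂→ℓ₂ operator (spectral) norm of a real matrix. -/
def specNorm {α β : Type*} [Fintype α] [Fintype β] (A : Matrix α β ℝ) : ℝ :=
  sSup {t : ℝ | ∃ x : β → ℝ, (∑ j, x j ^ 2) ≤ 1 ∧ t = Real.sqrt (∑ i, (∑ j, A i j * x j) ^ 2)}

variable {m N : ℕ}

/-- The submatrix of `Φ` formed by the columns indexed by `I`. -/
def colSub (Φ : Matrix (Fin m) (Fin N) ℝ) (I : Finset (Fin N)) :
    Matrix (Fin m) {i // i ∈ I} ℝ :=
  Matrix.of fun r j => Φ r (j : Fin N)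

/-- The Gram matrix `Φ_Iᵀ Φ_I`. -/
def gram (Φ : Matrix (Fin m) (Fin N) ℝ) (I : Finset (Fin N)) :
    Matrix {i // i ∈ I} {i // i ∈ I} ℝ :=
  (colSub Φ I)ᵀ * colSub Φ I

/-- `‖Φ_Iᵀ φ_i‖₂²`. -/
def sincSq (Φ : Matrix (Fin m) (Fin N) ℝ) (I : Finset (Fin N)) (i : Fin N) : ℝ :=
  ∑ j ∈ I, (∑ r, Φ r j * Φ r i) ^ 2

/-- All columns of `Φ` have unit ℓ₂ norm. -/
def unitCols (Φ : Matrix (Fin m) (Fin N) ℝ) : Prop :=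
  ∀ j, (∑ r, Φ r j ^ 2) = 1

/-- `Φ` is `(k,δ,ε)`-StRIP: a uniformly random `k`-subset `I` satisfies
`‖Φ_Iᵀ Φ_I − Id‖ ≤ δ` with probability at least `1 − ε`. -/
def StRIP (Φ : Matrix (Fin m) (Fin N) ℝ) (k : ℕ) (δ ε : ℝ) : Prop :=
  (1 - ε) * ((Finset.powersetCard k (univ : Finset (Fin N))).card : ℝ) ≤
    (((Finset.powersetCard k (univ : Finset (Fin N))).filter
        fun I => specNorm (gram Φ I - 1) ≤ δ).card : ℝ)

/-- `Φ` is `(k,α,ε)`-SINC: a uniformly random `k`-subset `I` satisfies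
`max_{i ∉ I} ‖Φ_Iᵀ φ_i‖₂² ≤ α` with probability at least `1 − ε`. -/
def SINC (Φ : Matrix (Fin m) (Fin N) ℝ) (k : ℕ) (α ε : ℝ) : Prop :=
  (1 - ε) * ((Finset.powersetCard k (univ : Finset (Fin N))).card : ℝ) ≤
    (((Finset.powersetCard k (univ : Finset (Fin N))).filter
        fun I => ∀ i ∉ I, sincSq Φ I i ≤ α).card : ℝ)

/-- ℓ₁ norm on `ℝ^N`. -/
def l1 (x : Fin N → ℝ) : ℝ := ∑ i, |x i|

/-- ℓ₂ norm on `ℝ^N`. -/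
def l2 (x : Fin N → ℝ) : ℝ := Real.sqrt (∑ i, x i ^ 2)

/-- Restriction `x_I` of a vector to the coordinates in `I` (zero outside `I`). -/
def restr (I : Finset (Fin N)) (x : Fin N → ℝ) : Fin N → ℝ :=
  fun i => if i ∈ I then x i else 0

/-- `x` is `k`-sparse. -/
def kSparse (k : ℕ) (x : Fin N → ℝ) : Prop :=
  ((univ : Finset (Fin N)).filter fun i => x i ≠ 0).card ≤ k

/-- `min_{x' k-sparse} ‖x − x′‖₁`. -/
def bestK (k : ℕ) (x : Fin N → ℝ) : ℝ :=
  sInf {t : ℝ | ∃ x' : Fin N → ℝ, kSparse k x' ∧ t = l1 (x - x')}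

/-- `xh` is a (noiseless) Basis Pursuit solution for the data `y`. -/
def isBPsol (Φ : Matrix (Fin m) (Fin N) ℝ) (y : Fin m → ℝ) (xh : Fin N → ℝ) : Prop :=
  Φ.mulVec xh = y ∧ ∀ u : Fin N → ℝ, Φ.mulVec u = y → l1 xh ≤ l1 u

/-- The set of pairs `(I, i)` with `I` a `k`-subset of `[N]` and `i ∉ I`. -/
def pairsFinset (N k : ℕ) : Finset (Finset (Fin N) × Fin N) :=
  (Finset.powersetCard k (univ : Finset (Fin N)) ×ˢ (univ : Finset (Fin N))).filter
    fun p => p.2 ∉ p.1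

/-- `Φ` is `(k,δ,α,ε)`-WSINC with weight `g(δ,t) = exp(−(1−δ)²/(8t²))`. -/
def WSINC (Φ : Matrix (Fin m) (Fin N) ℝ) (k : ℕ) (δ α ε : ℝ) : Prop :=
  (∑ p ∈ pairsFinset N k,
      if ∃ i ∉ p.1, α < sincSq Φ p.1 i then
        Real.exp (-(1 - δ) ^ 2 / (8 * sincSq Φ p.1 p.2))
      else 0) / ((pairsFinset N k).card : ℝ) ≤ ε / ((N : ℝ) - k)

/-- The ±1 vector on `I` associated with a Boolean vector. -/
def signVec {I : Finset (Fin N)} (b : {i // i ∈ I} → Bool) : {i // i ∈ I} → ℝ :=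
  fun j => if b j then 1 else -1

/-- The dual certificate `v(ζ,I) = Φᵀ Φ_I (Φ_Iᵀ Φ_I)⁻¹ ζ`. -/
def vvec (Φ : Matrix (Fin m) (Fin N) ℝ) (I : Finset (Fin N)) (ζ : {i // i ∈ I} → ℝ) :
    Fin N → ℝ :=
  Φᵀ.mulVec ((colSub Φ I).mulVec ((gram Φ I)⁻¹.mulVec ζ))

/-- `p(I)`: the probability, over i.i.d. uniform signs `ζ` on `I`, that
`‖v(ζ,I)_{I^c}‖_∞ > 1/2`. -/
def pBad (Φ : Matrix (Fin m) (Fin N) ℝ) (I : Finset (Fin N)) : ℝ :=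
  (((univ : Finset ({i // i ∈ I} → Bool)).filter
      (fun b => ∃ i ∉ I, 1 / 2 < |vvec Φ I (signVec b) i|)).card : ℝ) /
    ((univ : Finset ({i // i ∈ I} → Bool)).card : ℝ)

section AuxSpec

lemma aux_sq_sum_bound {α β : Type*} [Fintype α] [Fintype β] (A : Matrix α β ℝ)
    (x : β → ℝ) (hx : ∑ j, x j ^ 2 ≤ 1) :
    ∑ i, (∑ j, A i j * x j) ^ 2 ≤ ∑ i, ∑ j, A i j ^ 2 := by
  refine Finset.sum_le_sum fun i _ => ?_
  have h1 := Finset.sum_mul_sq_le_sq_mul_sq Finset.univ (fun j => A i j) x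
  have h2 : (0:ℝ) ≤ ∑ j, A i j ^ 2 := Finset.sum_nonneg fun j _ => sq_nonneg _
  nlinarith [h1, h2, hx]

lemma aux_bddAbove {α β : Type*} [Fintype α] [Fintype β] (A : Matrix α β ℝ) :
    BddAbove {t : ℝ | ∃ x : β → ℝ, (∑ j, x j ^ 2) ≤ 1 ∧
      t = Real.sqrt (∑ i, (∑ j, A i j * x j) ^ 2)} := by
  refine ⟨Real.sqrt (∑ i, ∑ j, A i j ^ 2), ?_⟩
  rintro t ⟨x, hx, rfl⟩
  exact Real.sqrt_le_sqrt (aux_sq_sum_bound A x hx)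

lemma aux_specA {α β : Type*} [Fintype α] [Fintype β] (A : Matrix α β ℝ) {δ : ℝ}
    (hδ : 0 ≤ δ) (h : specNorm A ≤ δ) (x : β → ℝ) :
    ∑ i, (A.mulVec x i) ^ 2 ≤ δ ^ 2 * ∑ j, x j ^ 2 := by
  have hmv : ∀ i, A.mulVec x i = ∑ j, A i j * x j := fun i => rfl
  have hT : (0:ℝ) ≤ ∑ j, x j ^ 2 := Finset.sum_nonneg fun j _ => sq_nonneg _
  rcases eq_or_lt_of_le hT with hT0 | hTpos
  · have hx : ∀ j, x j = 0 := by
      intro j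
      have := (Finset.sum_eq_zero_iff_of_nonneg
        (fun j _ => sq_nonneg (x j))).1 hT0.symm j (Finset.mem_univ j)
      exact pow_eq_zero_iff two_ne_zero |>.mp this
    have hz : ∀ i : α, A.mulVec x i = 0 := fun i => by
      rw [hmv]; exact Finset.sum_eq_zero fun j _ => by rw [hx j, mul_zero]
    simp [hz, ← hT0]
  · set c := Real.sqrt (∑ j, x j ^ 2) with hc
    have hcpos : 0 < c := Real.sqrt_pos.2 hTpos
    have hcsq : c ^ 2 = ∑ j, x j ^ 2 := Real.sq_sqrt hT
    have hx' : ∑ j, (x j / c) ^ 2 = 1 := by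
      simp only [div_pow, ← Finset.sum_div, ← hcsq]
      exact div_self (by positivity)
    have hmem : Real.sqrt (∑ i, (∑ j, A i j * (x j / c)) ^ 2) ≤ specNorm A :=
      le_csSup (aux_bddAbove A) ⟨fun j => x j / c, le_of_eq hx', rfl⟩
    have hscale : ∀ i : α, (∑ j, A i j * (x j / c)) = (∑ j, A i j * x j) / c := by
      intro i
      rw [Finset.sum_div]
      exact Finset.sum_congr rfl fun j _ => by ring
    have hP : (0:ℝ) ≤ ∑ i, (∑ j, A i j * x j) ^ 2 :=
      Finset.sum_nonneg fun i _ => sq_nonneg _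
    have hmem' : Real.sqrt ((∑ i, (∑ j, A i j * x j) ^ 2) / c ^ 2) ≤ δ := by
      refine le_trans (le_of_eq ?_) (hmem.trans h)
      congr 1
      rw [Finset.sum_div]
      exact Finset.sum_congr rfl fun i _ => by rw [hscale i, div_pow]
    have hPc : (0:ℝ) ≤ (∑ i, (∑ j, A i j * x j) ^ 2) / c ^ 2 := by positivity
    have hfin : (∑ i, (∑ j, A i j * x j) ^ 2) / c ^ 2 ≤ δ ^ 2 := by
      nlinarith [Real.sq_sqrt hPc, Real.sqrt_nonneg ((∑ i, (∑ j, A i j * x j) ^ 2) / c ^ 2)]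
    have := (div_le_iff₀ (by positivity : (0:ℝ) < c ^ 2)).1 hfin
    calc ∑ i, (A.mulVec x i) ^ 2 = ∑ i, (∑ j, A i j * x j) ^ 2 := by simp [hmv]
      _ ≤ δ ^ 2 * c ^ 2 := this
      _ = δ ^ 2 * ∑ j, x j ^ 2 := by rw [hcsq]

end AuxSpec
section AuxInv

lemma aux_inv_bound {κ : Type*} [Fintype κ] [DecidableEq κ] (G : Matrix κ κ ℝ) {δ : ℝ}
    (hδ0 : 0 ≤ δ) (hδ1 : δ < 1)
    (hspec : ∀ x : κ → ℝ, ∑ i, ((G - 1).mulVec x i) ^ 2 ≤ δ ^ 2 * ∑ j, x j ^ 2)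
    (w u : κ → ℝ) (hGw : G.mulVec w = u) :
    (1 - δ) ^ 2 * ∑ j, w j ^ 2 ≤ ∑ j, u j ^ 2 := by
  set f : (κ → ℝ) → EuclideanSpace ℝ κ := fun x => (WithLp.equiv 2 (∀ _ : κ, ℝ)).symm x with hf
  have hnorm : ∀ x : κ → ℝ, ‖f x‖ = Real.sqrt (∑ j, x j ^ 2) := by
    intro x
    rw [EuclideanSpace.norm_eq]
    congr 1
    exact Finset.sum_congr rfl fun j _ => by
      simp [hf, Real.norm_eq_abs, sq_abs]
  set d : κ → ℝ := (G - 1).mulVec w with hd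
  have hud : u = w + d := by
    rw [hd, Matrix.sub_mulVec, Matrix.one_mulVec, hGw]
    abel
  have hfud : f u = f w + f d := by rw [hud]; simp only [hf]; rw [WithLp.equiv_symm_apply, WithLp.toLp_add]
  have hdle : ‖f d‖ ≤ δ * ‖f w‖ := by
    rw [hnorm, hnorm]
    calc Real.sqrt (∑ j, d j ^ 2) ≤ Real.sqrt (δ ^ 2 * ∑ j, w j ^ 2) :=
          Real.sqrt_le_sqrt (hspec w)
      _ = δ * Real.sqrt (∑ j, w j ^ 2) := by
          rw [Real.sqrt_mul (sq_nonneg δ), Real.sqrt_sq hδ0]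
  have htri : ‖f w‖ ≤ ‖f u‖ + ‖f d‖ := by
    have : f w = f u - f d := by rw [hfud]; abel
    rw [this]
    exact norm_sub_le _ _
  have hkey : (1 - δ) * ‖f w‖ ≤ ‖f u‖ := by nlinarith [norm_nonneg (f w)]
  have hw2 : ‖f w‖ ^ 2 = ∑ j, w j ^ 2 := by
    rw [hnorm]; exact Real.sq_sqrt (Finset.sum_nonneg fun j _ => sq_nonneg _)
  have hu2 : ‖f u‖ ^ 2 = ∑ j, u j ^ 2 := by
    rw [hnorm]; exact Real.sq_sqrt (Finset.sum_nonneg fun j _ => sq_nonneg _)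
  nlinarith [hkey, hw2, hu2, norm_nonneg (f u),
    mul_nonneg (by linarith : (0:ℝ) ≤ 1 - δ) (norm_nonneg (f w))]

end AuxInv
section AuxHoeff

variable {κ : Type*} [Fintype κ] [DecidableEq κ]

lemma aux_sum_prod (g : κ → Bool → ℝ) :
    ∑ b : κ → Bool, ∏ j, g j (b j) = ∏ j, (g j true + g j false) := by
  calc ∑ b : κ → Bool, ∏ j, g j (b j)
      = ∑ b ∈ Fintype.piFinset (fun _ : κ => (univ : Finset Bool)), ∏ j, g j (b j) := by
        rw [Fintype.piFinset_univ]
    _ = ∏ j, ∑ y ∈ (univ : Finset Bool), g j y := Finset.sum_prod_piFinset _ _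
    _ = ∏ j, (g j true + g j false) := by
        refine Finset.prod_congr rfl fun j _ => ?_
        rw [Fintype.sum_bool]

lemma aux_hoeff_pos (w : κ → ℝ) {t : ℝ} (ht : 0 < t) (hS : 0 < ∑ j, w j ^ 2) :
    (((univ : Finset (κ → Bool)).filter
        fun b => t < ∑ j, w j * (if b j then (1:ℝ) else -1)).card : ℝ)
      ≤ (Fintype.card (κ → Bool) : ℝ) * Real.exp (-t ^ 2 / (2 * ∑ j, w j ^ 2)) := by
  set S := ∑ j, w j ^ 2 with hSdef
  set s := t / S with hsdef
  have hspos : 0 < s := div_pos ht hS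
  set X : (κ → Bool) → ℝ := fun b => ∑ j, w j * (if b j then (1:ℝ) else -1) with hX
  have step1 : (((univ : Finset (κ → Bool)).filter fun b => t < X b).card : ℝ)
      ≤ ∑ b : κ → Bool, Real.exp (s * (X b - t)) := by
    calc (((univ : Finset (κ → Bool)).filter fun b => t < X b).card : ℝ)
        = ∑ b ∈ (univ : Finset (κ → Bool)).filter fun b => t < X b, (1:ℝ) := by simp
      _ ≤ ∑ b ∈ (univ : Finset (κ → Bool)).filter fun b => t < X b,
            Real.exp (s * (X b - t)) := by
          refine Finset.sum_le_sum fun b hb => ?_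
          have := (Finset.mem_filter.1 hb).2
          exact Real.one_le_exp (mul_nonneg hspos.le (by linarith))
      _ ≤ ∑ b : κ → Bool, Real.exp (s * (X b - t)) :=
          Finset.sum_le_sum_of_subset_of_nonneg (Finset.filter_subset _ _)
            fun b _ _ => (Real.exp_pos _).le
  have step2 : ∑ b : κ → Bool, Real.exp (s * (X b - t))
      = Real.exp (-(s * t)) * ∑ b : κ → Bool, Real.exp (s * X b) := by
    rw [Finset.mul_sum]
    refine Finset.sum_congr rfl fun b _ => ?_
    rw [← Real.exp_add]
    ring_nf
  have step3 : ∑ b : κ → Bool, Real.exp (s * X b)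
      = ∏ j, (Real.exp (s * w j) + Real.exp (-(s * w j))) := by
    have h1 : ∀ b : κ → Bool, Real.exp (s * X b)
        = ∏ j, Real.exp (s * (w j * (if b j then (1:ℝ) else -1))) := by
      intro b
      rw [← Real.exp_sum]
      congr 1
      rw [hX, Finset.mul_sum]
    rw [Finset.sum_congr rfl fun b _ => h1 b,
      aux_sum_prod (fun j y => Real.exp (s * (w j * (if y then (1:ℝ) else -1))))]
    refine Finset.prod_congr rfl fun j _ => ?_
    norm_num
  have step4 : ∏ j, (Real.exp (s * w j) + Real.exp (-(s * w j)))
      ≤ (Fintype.card (κ → Bool) : ℝ) * Real.exp (s ^ 2 * S / 2) := by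
    have hb : ∀ j : κ, Real.exp (s * w j) + Real.exp (-(s * w j))
        ≤ 2 * Real.exp ((s * w j) ^ 2 / 2) := by
      intro j
      have := Real.cosh_le_exp_half_sq (s * w j)
      rw [Real.cosh_eq] at this
      linarith
    calc ∏ j, (Real.exp (s * w j) + Real.exp (-(s * w j)))
        ≤ ∏ j, (2 * Real.exp ((s * w j) ^ 2 / 2)) := by
          refine Finset.prod_le_prod (fun j _ => by positivity) fun j _ => hb j
      _ = (2 : ℝ) ^ Fintype.card κ * Real.exp (∑ j, (s * w j) ^ 2 / 2) := by
          rw [Finset.prod_mul_distrib, Finset.prod_const, Real.exp_sum, Finset.card_univ]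
      _ = (Fintype.card (κ → Bool) : ℝ) * Real.exp (s ^ 2 * S / 2) := by
          congr 1
          · rw [Fintype.card_fun, Fintype.card_bool]
            push_cast
            ring
          · congr 1
            rw [hSdef, Finset.mul_sum, Finset.sum_div]
            exact Finset.sum_congr rfl fun j _ => by ring
  have hexp : Real.exp (-(s * t)) * ((Fintype.card (κ → Bool) : ℝ) * Real.exp (s ^ 2 * S / 2))
      = (Fintype.card (κ → Bool) : ℝ) * Real.exp (-t ^ 2 / (2 * S)) := by
    rw [← mul_assoc, mul_comm (Real.exp _), mul_assoc, ← Real.exp_add]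
    congr 2
    rw [hsdef]
    field_simp
    ring
  calc (((univ : Finset (κ → Bool)).filter fun b => t < X b).card : ℝ)
      ≤ Real.exp (-(s * t)) * ∑ b : κ → Bool, Real.exp (s * X b) := by
        rw [← step2]; exact step1
    _ ≤ Real.exp (-(s * t)) * ((Fintype.card (κ → Bool) : ℝ) * Real.exp (s ^ 2 * S / 2)) := by
        rw [step3]
        exact mul_le_mul_of_nonneg_left step4 (Real.exp_pos _).le
    _ = (Fintype.card (κ → Bool) : ℝ) * Real.exp (-t ^ 2 / (2 * S)) := hexp

lemma aux_hoeff_abs (w : κ → ℝ) {t : ℝ} (ht : 0 < t) (hS : 0 < ∑ j, w j ^ 2) :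
    (((univ : Finset (κ → Bool)).filter
        fun b => t < |∑ j, w j * (if b j then (1:ℝ) else -1)|).card : ℝ)
      ≤ (Fintype.card (κ → Bool) : ℝ) * (2 * Real.exp (-t ^ 2 / (2 * ∑ j, w j ^ 2))) := by
  have hSneg : 0 < ∑ j, (-w j) ^ 2 := by simpa [neg_pow] using hS
  have hsub : ((univ : Finset (κ → Bool)).filter
        fun b => t < |∑ j, w j * (if b j then (1:ℝ) else -1)|)
      ⊆ ((univ : Finset (κ → Bool)).filter
          fun b => t < ∑ j, w j * (if b j then (1:ℝ) else -1))
        ∪ ((univ : Finset (κ → Bool)).filter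
          fun b => t < ∑ j, (-w j) * (if b j then (1:ℝ) else -1)) := by
    intro b hb
    have hb' := (Finset.mem_filter.1 hb).2
    rw [lt_abs] at hb'
    rcases hb' with h | h
    · exact Finset.mem_union_left _ (Finset.mem_filter.2 ⟨Finset.mem_univ _, h⟩)
    · refine Finset.mem_union_right _ (Finset.mem_filter.2 ⟨Finset.mem_univ _, ?_⟩)
      have : ∑ j, (-w j) * (if b j then (1:ℝ) else -1)
          = -∑ j, w j * (if b j then (1:ℝ) else -1) := by
        rw [← Finset.sum_neg_distrib]
        exact Finset.sum_congr rfl fun j _ => by ring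
      rw [this]
      exact h
  have h1 := aux_hoeff_pos w ht hS
  have h2 := aux_hoeff_pos (fun j => -w j) ht hSneg
  have hcast : ((((univ : Finset (κ → Bool)).filter
        fun b => t < |∑ j, w j * (if b j then (1:ℝ) else -1)|).card : ℝ))
      ≤ (((univ : Finset (κ → Bool)).filter
          fun b => t < ∑ j, w j * (if b j then (1:ℝ) else -1)).card : ℝ)
        + (((univ : Finset (κ → Bool)).filter
          fun b => t < ∑ j, (-w j) * (if b j then (1:ℝ) else -1)).card : ℝ) := by
    have := le_trans (Finset.card_le_card hsub) (Finset.card_union_le _ _)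
    exact_mod_cast this
  have hSeq : ∑ j, (-w j) ^ 2 = ∑ j, w j ^ 2 := by simp [neg_pow]
  rw [hSeq] at h2
  calc _ ≤ _ := hcast
    _ ≤ (Fintype.card (κ → Bool) : ℝ) * Real.exp (-t ^ 2 / (2 * ∑ j, w j ^ 2))
        + (Fintype.card (κ → Bool) : ℝ) * Real.exp (-t ^ 2 / (2 * ∑ j, w j ^ 2)) :=
        add_le_add h1 h2
    _ = (Fintype.card (κ → Bool) : ℝ) * (2 * Real.exp (-t ^ 2 / (2 * ∑ j, w j ^ 2))) := by ring

end AuxHoeff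
section AuxCount

variable {m N : ℕ}

lemma aux_vvec_eq (Φ : Matrix (Fin m) (Fin N) ℝ) (I : Finset (Fin N)) (i : Fin N)
    (ζ : {x // x ∈ I} → ℝ) :
    vvec Φ I ζ i = ∑ j, ((gram Φ I)⁻¹.mulVec
      (fun j : {x // x ∈ I} => ∑ r, Φ r (j : Fin N) * Φ r i)) j * ζ j := by
  have hGsym : (gram Φ I)ᵀ = gram Φ I := by
    rw [_root_.gram, Matrix.transpose_mul, Matrix.transpose_transpose]
  have hGinv : ((gram Φ I)⁻¹)ᵀ = (gram Φ I)⁻¹ := by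
    rw [Matrix.transpose_nonsing_inv, hGsym]
  have e1 : vvec Φ I ζ i
      = (fun r => Φ r i) ⬝ᵥ ((colSub Φ I) *ᵥ ((gram Φ I)⁻¹ *ᵥ ζ)) := rfl
  rw [e1, Matrix.dotProduct_mulVec]
  have e2 : (fun r => Φ r i) ᵥ* (colSub Φ I)
      = fun j : {x // x ∈ I} => ∑ r, Φ r (j : Fin N) * Φ r i := by
    funext j
    simp [Matrix.vecMul, dotProduct, colSub, mul_comm]
  rw [e2, Matrix.dotProduct_mulVec]
  have e3 : (fun j : {x // x ∈ I} => ∑ r, Φ r (j : Fin N) * Φ r i) ᵥ* (gram Φ I)⁻¹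
      = (gram Φ I)⁻¹ *ᵥ (fun j : {x // x ∈ I} => ∑ r, Φ r (j : Fin N) * Φ r i) := by
    conv_lhs => rw [← hGinv]
    rw [Matrix.vecMul_transpose]
  rw [e3]
  rfl

lemma aux_sincSq_eq (Φ : Matrix (Fin m) (Fin N) ℝ) (I : Finset (Fin N)) (i : Fin N) :
    sincSq Φ I i = ∑ j : {x // x ∈ I}, (∑ r, Φ r (j : Fin N) * Φ r i) ^ 2 := by
  rw [sincSq]
  exact (Finset.sum_coe_sort I fun j => (∑ r, Φ r j * Φ r i) ^ 2).symm

lemma aux_count_zero (Φ : Matrix (Fin m) (Fin N) ℝ) (I : Finset (Fin N)) (i : Fin N)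
    (h0 : sincSq Φ I i = 0) :
    ((univ : Finset ({x // x ∈ I} → Bool)).filter
        fun b => 1 / 2 < |vvec Φ I (signVec b) i|) = ∅ := by
  have hu : (fun j : {x // x ∈ I} => ∑ r, Φ r (j : Fin N) * Φ r i) = 0 := by
    funext j
    have h := h0
    rw [aux_sincSq_eq] at h
    have := (Finset.sum_eq_zero_iff_of_nonneg
      (fun j _ => sq_nonneg ((fun j : {x // x ∈ I} => ∑ r, Φ r (j : Fin N) * Φ r i) j))).1 h
        j (Finset.mem_univ j)
    exact pow_eq_zero_iff two_ne_zero |>.mp this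
  refine Finset.filter_eq_empty_iff.2 fun b _ => ?_
  rw [aux_vvec_eq, hu, Matrix.mulVec_zero]
  simp

set_option maxHeartbeats 1000000 in
lemma aux_count_pos (Φ : Matrix (Fin m) (Fin N) ℝ) (I : Finset (Fin N)) (i : Fin N)
    {δ : ℝ} (hδ0 : 0 ≤ δ) (hδ1 : δ < 1)
    (hRIP : specNorm (gram Φ I - 1) ≤ δ) (hpos : 0 < sincSq Φ I i) :
    (((univ : Finset ({x // x ∈ I} → Bool)).filter
        fun b => 1 / 2 < |vvec Φ I (signVec b) i|).card : ℝ)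
      ≤ (Fintype.card ({x // x ∈ I} → Bool) : ℝ) *
          (2 * Real.exp (-(1 - δ) ^ 2 / (8 * sincSq Φ I i))) := by
  set u : {x // x ∈ I} → ℝ := fun j => ∑ r, Φ r (j : Fin N) * Φ r i with hu
  set w : {x // x ∈ I} → ℝ := (gram Φ I)⁻¹.mulVec u with hw
  have hspec : ∀ x : {x // x ∈ I} → ℝ,
      ∑ i', ((gram Φ I - 1).mulVec x i') ^ 2 ≤ δ ^ 2 * ∑ j, x j ^ 2 :=
    fun x => aux_specA _ hδ0 hRIP x
  -- invertibility
  have hker : ∀ v : {x // x ∈ I} → ℝ, (gram Φ I).mulVec v = 0 → v = 0 := by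
    intro v hv
    have h1 : (gram Φ I - 1).mulVec v = -v := by
      rw [Matrix.sub_mulVec, Matrix.one_mulVec, hv]
      abel
    have h2 := hspec v
    rw [h1] at h2
    have h3 : ∑ i' : {x // x ∈ I}, (-v) i' ^ 2 = ∑ j, v j ^ 2 := by
      exact Finset.sum_congr rfl fun j _ => by simp [neg_pow]
    rw [h3] at h2
    have hvz : ∑ j, v j ^ 2 = 0 := by
      have hT := Finset.sum_nonneg fun j (_ : j ∈ univ) => sq_nonneg (v j)
      rcases eq_or_lt_of_le hT with h | h
      · exact h.symm
      · have hδsq : δ ^ 2 < 1 := by nlinarith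
        have := mul_lt_mul_of_pos_right hδsq h
        nlinarith [h2]
    funext j
    have := (Finset.sum_eq_zero_iff_of_nonneg (fun j _ => sq_nonneg (v j))).1 hvz j
      (Finset.mem_univ j)
    exact pow_eq_zero_iff two_ne_zero |>.mp this
  have hinj : Function.Injective (gram Φ I).mulVec := by
    intro x y hxy
    have hz : (gram Φ I).mulVec (x - y) = 0 := by
      rw [Matrix.mulVec_sub, hxy, sub_self]
    exact sub_eq_zero.mp (hker _ hz)
  have hdet : IsUnit (gram Φ I).det :=
    Matrix.isUnit_iff_isUnit_det _ |>.mp (Matrix.mulVec_injective_iff_isUnit.mp hinj)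
  have hGw : (gram Φ I).mulVec w = u := by
    rw [hw, Matrix.mulVec_mulVec, Matrix.mul_nonsing_inv _ hdet, Matrix.one_mulVec]
  have hsu : sincSq Φ I i = ∑ j, u j ^ 2 := aux_sincSq_eq Φ I i
  have hbound : (1 - δ) ^ 2 * ∑ j, w j ^ 2 ≤ ∑ j, u j ^ 2 :=
    aux_inv_bound _ hδ0 hδ1 hspec w u hGw
  have hfil : ((univ : Finset ({x // x ∈ I} → Bool)).filter
        fun b => 1 / 2 < |vvec Φ I (signVec b) i|)
      = ((univ : Finset ({x // x ∈ I} → Bool)).filter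
        fun b => 1 / 2 < |∑ j, w j * (if b j then (1:ℝ) else -1)|) := by
    refine Finset.filter_congr fun b _ => ?_
    rw [aux_vvec_eq]
    rfl
  rcases eq_or_lt_of_le (Finset.sum_nonneg fun j (_ : j ∈ univ) => sq_nonneg (w j)) with hw0 | hwpos
  · -- w = 0
    have hwz : ∀ j, w j = 0 := by
      intro j
      have := (Finset.sum_eq_zero_iff_of_nonneg (fun j _ => sq_nonneg (w j))).1 hw0.symm j
        (Finset.mem_univ j)
      exact pow_eq_zero_iff two_ne_zero |>.mp this
    have : ((univ : Finset ({x // x ∈ I} → Bool)).filter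
        fun b => 1 / 2 < |vvec Φ I (signVec b) i|) = ∅ := by
      rw [hfil]
      refine Finset.filter_eq_empty_iff.2 fun b _ => ?_
      have : ∑ j, w j * (if b j then (1:ℝ) else -1) = 0 :=
        Finset.sum_eq_zero fun j _ => by rw [hwz j, zero_mul]
      rw [this]
      simp
    rw [this]
    simp only [Finset.card_empty, Nat.cast_zero]
    positivity
  · rw [hfil]
    have h1 := aux_hoeff_abs w (by norm_num : (0:ℝ) < 1/2) hwpos
    refine h1.trans ?_
    have hmono : Real.exp (-(1/2:ℝ) ^ 2 / (2 * ∑ j, w j ^ 2))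
        ≤ Real.exp (-(1 - δ) ^ 2 / (8 * sincSq Φ I i)) := by
      rw [Real.exp_le_exp]
      rw [div_le_div_iff₀ (by linarith [hwpos]) (by linarith [hpos])]
      rw [hsu]
      nlinarith [hbound, hwpos, sq_nonneg (1 - δ)]
    have hcard : (0:ℝ) ≤ (Fintype.card ({x // x ∈ I} → Bool) : ℝ) := Nat.cast_nonneg _
    nlinarith [hmono, hcard, Real.exp_pos (-(1/2:ℝ) ^ 2 / (2 * ∑ j, w j ^ 2))]

end AuxCount
section AuxAssemble

variable {m N : ℕ}

lemma aux_union (Φ : Matrix (Fin m) (Fin N) ℝ) (I : Finset (Fin N)) :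
    (((univ : Finset ({i // i ∈ I} → Bool)).filter
        (fun b => ∃ i ∉ I, 1 / 2 < |vvec Φ I (signVec b) i|)).card : ℝ)
      ≤ ∑ i ∈ (univ : Finset (Fin N)).filter (· ∉ I),
          (((univ : Finset ({i // i ∈ I} → Bool)).filter
            (fun b => 1 / 2 < |vvec Φ I (signVec b) i|)).card : ℝ) := by
  have hsub : ((univ : Finset ({i // i ∈ I} → Bool)).filter
        (fun b => ∃ i ∉ I, 1 / 2 < |vvec Φ I (signVec b) i|))
      ⊆ ((univ : Finset (Fin N)).filter (· ∉ I)).biUnion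
          (fun i => (univ : Finset ({i // i ∈ I} → Bool)).filter
            (fun b => 1 / 2 < |vvec Φ I (signVec b) i|)) := by
    intro b hb
    obtain ⟨i, hiI, hlt⟩ := (Finset.mem_filter.1 hb).2
    exact Finset.mem_biUnion.2 ⟨i, by simp [hiI],
      Finset.mem_filter.2 ⟨Finset.mem_univ _, hlt⟩⟩
  calc (((univ : Finset ({i // i ∈ I} → Bool)).filter
        (fun b => ∃ i ∉ I, 1 / 2 < |vvec Φ I (signVec b) i|)).card : ℝ)
      ≤ ((((univ : Finset (Fin N)).filter (· ∉ I)).biUnion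
          (fun i => (univ : Finset ({i // i ∈ I} → Bool)).filter
            (fun b => 1 / 2 < |vvec Φ I (signVec b) i|))).card : ℝ) := by
        exact_mod_cast Finset.card_le_card hsub
    _ ≤ _ := by
        have := Finset.card_biUnion_le (s := (univ : Finset (Fin N)).filter (· ∉ I))
          (t := fun i => (univ : Finset ({i // i ∈ I} → Bool)).filter
            (fun b => 1 / 2 < |vvec Φ I (signVec b) i|))
        exact_mod_cast this

lemma aux_count_all (Φ : Matrix (Fin m) (Fin N) ℝ) (I : Finset (Fin N)) (i : Fin N)
    {δ : ℝ} (hδ0 : 0 ≤ δ) (hδ1 : δ < 1) (hRIP : specNorm (gram Φ I - 1) ≤ δ) :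
    (((univ : Finset ({x // x ∈ I} → Bool)).filter
        fun b => 1 / 2 < |vvec Φ I (signVec b) i|).card : ℝ)
      ≤ (Fintype.card ({x // x ∈ I} → Bool) : ℝ) *
          (2 * Real.exp (-(1 - δ) ^ 2 / (8 * sincSq Φ I i))) := by
  have hs0 : 0 ≤ sincSq Φ I i := Finset.sum_nonneg fun j _ => sq_nonneg _
  rcases eq_or_lt_of_le hs0 with h0 | hpos
  · rw [aux_count_zero Φ I i h0.symm]
    simp only [Finset.card_empty, Nat.cast_zero]
    positivity
  · exact aux_count_pos Φ I i hδ0 hδ1 hRIP hpos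

lemma aux_count_alpha (Φ : Matrix (Fin m) (Fin N) ℝ) (I : Finset (Fin N)) (i : Fin N)
    {δ α : ℝ} (hδ0 : 0 ≤ δ) (hδ1 : δ < 1) (hαpos : 0 < α)
    (hRIP : specNorm (gram Φ I - 1) ≤ δ) (hle : sincSq Φ I i ≤ α) :
    (((univ : Finset ({x // x ∈ I} → Bool)).filter
        fun b => 1 / 2 < |vvec Φ I (signVec b) i|).card : ℝ)
      ≤ (Fintype.card ({x // x ∈ I} → Bool) : ℝ) *
          (2 * Real.exp (-(1 - δ) ^ 2 / (8 * α))) := by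
  have hs0 : 0 ≤ sincSq Φ I i := Finset.sum_nonneg fun j _ => sq_nonneg _
  rcases eq_or_lt_of_le hs0 with h0 | hpos
  · rw [aux_count_zero Φ I i h0.symm]
    simp only [Finset.card_empty, Nat.cast_zero]
    positivity
  · refine (aux_count_pos Φ I i hδ0 hδ1 hRIP hpos).trans ?_
    have hmono : Real.exp (-(1 - δ) ^ 2 / (8 * sincSq Φ I i))
        ≤ Real.exp (-(1 - δ) ^ 2 / (8 * α)) := by
      rw [Real.exp_le_exp, neg_div, neg_div, neg_le_neg_iff]
      exact div_le_div_of_nonneg_left (sq_nonneg _) (by linarith) (by linarith)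
    have hcard : (0:ℝ) ≤ (Fintype.card ({x // x ∈ I} → Bool) : ℝ) := Nat.cast_nonneg _
    nlinarith [hmono, hcard]

lemma aux_pBad_le_eps (Φ : Matrix (Fin m) (Fin N) ℝ) (I : Finset (Fin N))
    {δ ε α : ℝ} (hδ0 : 0 ≤ δ) (hδ1 : δ < 1) (hαpos : 0 < α) (hε0 : 0 < ε)
    (hNpos : 0 < N)
    (hexpα : Real.exp (-(1 - δ) ^ 2 / (8 * α)) = ε / (2 * N))
    (hRIP : specNorm (gram Φ I - 1) ≤ δ)
    (hnA : ∀ i ∉ I, sincSq Φ I i ≤ α) :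
    pBad Φ I ≤ ε := by
  have hn2 : (0:ℝ) < ((univ : Finset ({i // i ∈ I} → Bool)).card : ℝ) := by
    exact_mod_cast Finset.card_pos.2 Finset.univ_nonempty
  rw [pBad, div_le_iff₀ hn2]
  have hcardeq : ((univ : Finset ({i // i ∈ I} → Bool)).card : ℝ)
      = (Fintype.card ({i // i ∈ I} → Bool) : ℝ) := by
    rw [Finset.card_univ]
  set c : ℝ := (Fintype.card ({i // i ∈ I} → Bool) : ℝ) * (2 * (ε / (2 * N))) with hc
  have hstep : ∀ i ∈ (univ : Finset (Fin N)).filter (· ∉ I),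
      (((univ : Finset ({x // x ∈ I} → Bool)).filter
        fun b => 1 / 2 < |vvec Φ I (signVec b) i|).card : ℝ) ≤ c := by
    intro i hi
    have hiI : i ∉ I := by simpa using (Finset.mem_filter.1 hi).2
    have := aux_count_alpha Φ I i hδ0 hδ1 hαpos hRIP (hnA i hiI)
    rw [hexpα] at this
    exact this
  calc (((univ : Finset ({i // i ∈ I} → Bool)).filter
        (fun b => ∃ i ∉ I, 1 / 2 < |vvec Φ I (signVec b) i|)).card : ℝ)
      ≤ ∑ i ∈ (univ : Finset (Fin N)).filter (· ∉ I),
          (((univ : Finset ({i // i ∈ I} → Bool)).filter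
            (fun b => 1 / 2 < |vvec Φ I (signVec b) i|)).card : ℝ) := aux_union Φ I
    _ ≤ ∑ _i ∈ (univ : Finset (Fin N)).filter (· ∉ I), c := Finset.sum_le_sum hstep
    _ = (((univ : Finset (Fin N)).filter (· ∉ I)).card : ℝ) * c := by
        rw [Finset.sum_const, nsmul_eq_mul]
    _ ≤ (N : ℝ) * c := by
        have hcnn : 0 ≤ c := by
          rw [hc]; positivity
        have hcard : (((univ : Finset (Fin N)).filter (· ∉ I)).card : ℝ) ≤ (N : ℝ) := by
          have := Finset.card_filter_le (univ : Finset (Fin N)) (· ∉ I)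
          have h2 : (univ : Finset (Fin N)).card = N := by simp
          exact_mod_cast h2 ▸ this
        exact mul_le_mul_of_nonneg_right hcard hcnn
    _ = ε * ((univ : Finset ({i // i ∈ I} → Bool)).card : ℝ) := by
        rw [hc, hcardeq]
        have hN : (N:ℝ) ≠ 0 := by exact_mod_cast hNpos.ne'
        field_simp

lemma aux_pairs_card (N k : ℕ) :
    (pairsFinset N k).card
      = (Finset.powersetCard k (univ : Finset (Fin N))).card * (N - k) := by
  classical
  rw [pairsFinset, Finset.card_filter, Finset.sum_product]
  have hstep : ∀ I ∈ Finset.powersetCard k (univ : Finset (Fin N)),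
      (∑ i : Fin N, if i ∉ I then 1 else 0) = N - k := by
    intro I hI
    have h1 : (∑ i : Fin N, if i ∉ I then 1 else 0)
        = ((univ : Finset (Fin N)).filter (fun i => i ∉ I)).card :=
      (Finset.card_filter _ _).symm
    have h2 : (univ : Finset (Fin N)).filter (fun i => i ∉ I) = Iᶜ := by
      ext x; simp [Finset.mem_compl]
    rw [h1, h2, Finset.card_compl, Fintype.card_fin,
      Finset.mem_powersetCard_univ.mp hI]
  rw [Finset.sum_congr rfl hstep, Finset.sum_const, smul_eq_mul]

end AuxAssemble
/-- Lemma: `p(I) > ε` holds with probability `< 3ε` over the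
choice of the `k`-subset `I`. -/
theorem stmt5 (m N k : ℕ) (hkN : k < N) (δ ε : ℝ)
    (hδ0 : 0 < δ) (hδ1 : δ < 1) (hε0 : 0 < ε) (hε1 : ε < 1)
    (Φ : Matrix (Fin m) (Fin N) ℝ) (hcols : unitCols Φ)
    (hStRIP : StRIP Φ k δ ε)
    (hWSINC : WSINC Φ k δ ((1 - δ) ^ 2 / (8 * Real.log (2 * N / ε))) (ε ^ 2)) :
    (((Finset.powersetCard k (univ : Finset (Fin N))).filter
        (fun I => ε < pBad Φ I)).card : ℝ) <
      3 * ε * ((Finset.powersetCard k (univ : Finset (Fin N))).card : ℝ) := by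
  have hk : k ≤ N := hkN.le
  have hNpos : 0 < N := lt_of_le_of_lt (Nat.zero_le k) hkN
  set P := Finset.powersetCard k (univ : Finset (Fin N)) with hP
  have hPpos : 0 < (P.card : ℝ) := by
    have hne : P.Nonempty := by
      rw [hP, Finset.powersetCard_nonempty]
      simpa using hk
    exact_mod_cast Finset.card_pos.mpr hne
  -- log and α facts
  set L := Real.log (2 * N / ε) with hLdef
  have h2N : (1:ℝ) < 2 * N / ε := by
    rw [lt_div_iff₀ hε0]
    have h1N : (1:ℝ) ≤ (N:ℝ) := by exact_mod_cast hNpos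
    nlinarith
  have hLpos : 0 < L := Real.log_pos h2N
  set α : ℝ := (1 - δ) ^ 2 / (8 * L) with hαdef
  have h1δ : (0:ℝ) < (1 - δ) ^ 2 := pow_pos (by linarith) 2
  have hαpos : 0 < α := div_pos h1δ (by linarith)
  have hexpα : Real.exp (-(1 - δ) ^ 2 / (8 * α)) = ε / (2 * N) := by
    have h8α : 8 * α = (1 - δ) ^ 2 / L := by
      rw [hαdef]; field_simp
    rw [h8α]
    have he : -(1 - δ) ^ 2 / ((1 - δ) ^ 2 / L) = -L := by
      rw [neg_div, div_div_eq_mul_div, mul_div_cancel_left₀ L h1δ.ne']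
    rw [he, Real.exp_neg, hLdef, Real.exp_log (by linarith : (0:ℝ) < 2 * N / ε), inv_div]
  -- RIP bad set is small
  have hS1 : ((P.filter (fun I => ¬ specNorm (gram Φ I - 1) ≤ δ)).card : ℝ)
      ≤ ε * (P.card : ℝ) := by
    have hsplit := Finset.card_filter_add_card_filter_not
      (s := P) (p := fun I => specNorm (gram Φ I - 1) ≤ δ)
    have hcast : ((P.filter (fun I => specNorm (gram Φ I - 1) ≤ δ)).card : ℝ)
        + ((P.filter (fun I => ¬ specNorm (gram Φ I - 1) ≤ δ)).card : ℝ)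
        = (P.card : ℝ) := by exact_mod_cast hsplit
    have hST : (1 - ε) * (P.card : ℝ)
        ≤ ((P.filter (fun I => specNorm (gram Φ I - 1) ≤ δ)).card : ℝ) := hStRIP
    linarith
  -- the doubly-bad set S2
  set S2 := P.filter (fun I => (ε < pBad Φ I) ∧ specNorm (gram Φ I - 1) ≤ δ ∧
      ∃ i ∉ I, α < sincSq Φ I i) with hS2def
  -- decomposition
  have hsub : P.filter (fun I => ε < pBad Φ I)
      ⊆ (P.filter (fun I => ¬ specNorm (gram Φ I - 1) ≤ δ)) ∪ S2 := by
    intro I hI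
    obtain ⟨hIP, hbad⟩ := Finset.mem_filter.1 hI
    by_cases hrip : specNorm (gram Φ I - 1) ≤ δ
    · by_cases hAα : ∃ i ∉ I, α < sincSq Φ I i
      · exact Finset.mem_union_right _ (Finset.mem_filter.2 ⟨hIP, hbad, hrip, hAα⟩)
      · exfalso
        push_neg at hAα
        have := aux_pBad_le_eps Φ I hδ0.le hδ1 hαpos hε0 hNpos hexpα hrip hAα
        linarith
    · exact Finset.mem_union_left _ (Finset.mem_filter.2 ⟨hIP, hrip⟩)
  have hcard_dec : ((P.filter (fun I => ε < pBad Φ I)).card : ℝ)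
      ≤ ((P.filter (fun I => ¬ specNorm (gram Φ I - 1) ≤ δ)).card : ℝ)
        + (S2.card : ℝ) := by
    have h1 := Finset.card_le_card hsub
    have h2 := Finset.card_union_le
      (P.filter (fun I => ¬ specNorm (gram Φ I - 1) ≤ δ)) S2
    exact_mod_cast le_trans h1 h2
  -- WSINC sum bound
  have hNk : (0:ℝ) < (N : ℝ) - k := by
    have : (k:ℝ) < N := by exact_mod_cast hkN
    linarith
  have hpc : ((pairsFinset N k).card : ℝ) = (P.card : ℝ) * ((N:ℝ) - k) := by
    rw [aux_pairs_card N k, hP]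
    push_cast [Nat.cast_sub hk]
    ring
  set WSsum := ∑ p ∈ pairsFinset N k,
      (if ∃ i ∉ p.1, α < sincSq Φ p.1 i then
        Real.exp (-(1 - δ) ^ 2 / (8 * sincSq Φ p.1 p.2))
      else 0) with hWSdef
  have hWS : WSsum / ((pairsFinset N k).card : ℝ) ≤ ε ^ 2 / ((N : ℝ) - k) := hWSINC
  have hWSsum_le : WSsum ≤ ε ^ 2 * (P.card : ℝ) := by
    have hpcpos : (0:ℝ) < ((pairsFinset N k).card : ℝ) := by
      rw [hpc]; exact mul_pos hPpos hNk
    have h1 : WSsum ≤ ε ^ 2 / ((N:ℝ) - k) * ((pairsFinset N k).card : ℝ) :=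
      (div_le_iff₀ hpcpos).mp hWS
    rw [hpc] at h1
    refine h1.trans (le_of_eq ?_)
    field_simp
  -- rewrite WSsum as a double sum
  have hdouble : WSsum = ∑ I ∈ P, ∑ i ∈ (univ : Finset (Fin N)).filter (· ∉ I),
      (if ∃ i' ∉ I, α < sincSq Φ I i' then
        Real.exp (-(1 - δ) ^ 2 / (8 * sincSq Φ I i)) else 0) := by
    rw [hWSdef, pairsFinset, Finset.sum_filter, Finset.sum_product]
    refine Finset.sum_congr rfl fun I _ => ?_
    rw [Finset.sum_filter]
  -- the S2 part of the double sum
  have hsum2 : ∑ I ∈ S2, (∑ i ∈ (univ : Finset (Fin N)).filter (· ∉ I),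
      Real.exp (-(1 - δ) ^ 2 / (8 * sincSq Φ I i))) ≤ WSsum := by
    rw [hdouble]
    have hcong : ∀ I ∈ S2, (∑ i ∈ (univ : Finset (Fin N)).filter (· ∉ I),
        Real.exp (-(1 - δ) ^ 2 / (8 * sincSq Φ I i)))
        = ∑ i ∈ (univ : Finset (Fin N)).filter (· ∉ I),
          (if ∃ i' ∉ I, α < sincSq Φ I i' then
            Real.exp (-(1 - δ) ^ 2 / (8 * sincSq Φ I i)) else 0) := by
      intro I hI
      have hAα : ∃ i' ∉ I, α < sincSq Φ I i' := (Finset.mem_filter.1 hI).2.2.2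
      exact Finset.sum_congr rfl fun i _ => by rw [if_pos hAα]
    rw [Finset.sum_congr rfl hcong]
    refine Finset.sum_le_sum_of_subset_of_nonneg (Finset.filter_subset _ _) ?_
    intro I _ _
    refine Finset.sum_nonneg fun i _ => ?_
    split
    · exact (Real.exp_pos _).le
    · exact le_refl 0
  -- pBad bound on S2
  have hpBad2 : ∀ I ∈ S2, pBad Φ I
      ≤ 2 * ∑ i ∈ (univ : Finset (Fin N)).filter (· ∉ I),
          Real.exp (-(1 - δ) ^ 2 / (8 * sincSq Φ I i)) := by
    intro I hI
    have hrip : specNorm (gram Φ I - 1) ≤ δ := (Finset.mem_filter.1 hI).2.2.1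
    have hn2 : (0:ℝ) < ((univ : Finset ({i // i ∈ I} → Bool)).card : ℝ) := by
      exact_mod_cast Finset.card_pos.2 Finset.univ_nonempty
    rw [pBad, div_le_iff₀ hn2]
    have hcardeq : ((univ : Finset ({i // i ∈ I} → Bool)).card : ℝ)
        = (Fintype.card ({i // i ∈ I} → Bool) : ℝ) := by rw [Finset.card_univ]
    calc (((univ : Finset ({i // i ∈ I} → Bool)).filter
          (fun b => ∃ i ∉ I, 1 / 2 < |vvec Φ I (signVec b) i|)).card : ℝ)
        ≤ ∑ i ∈ (univ : Finset (Fin N)).filter (· ∉ I),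
            (((univ : Finset ({i // i ∈ I} → Bool)).filter
              (fun b => 1 / 2 < |vvec Φ I (signVec b) i|)).card : ℝ) := aux_union Φ I
      _ ≤ ∑ i ∈ (univ : Finset (Fin N)).filter (· ∉ I),
            (Fintype.card ({x // x ∈ I} → Bool) : ℝ) *
              (2 * Real.exp (-(1 - δ) ^ 2 / (8 * sincSq Φ I i))) :=
          Finset.sum_le_sum fun i _ => aux_count_all Φ I i hδ0.le hδ1 hrip
      _ = (2 * ∑ i ∈ (univ : Finset (Fin N)).filter (· ∉ I),
            Real.exp (-(1 - δ) ^ 2 / (8 * sincSq Φ I i)))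
          * ((univ : Finset ({i // i ∈ I} → Bool)).card : ℝ) := by
          rw [hcardeq, Finset.mul_sum]
          rw [Finset.sum_mul]
          exact Finset.sum_congr rfl fun i _ => by ring
  -- Markov on S2
  rcases Finset.eq_empty_or_nonempty S2 with hS2e | hS2e
  · rw [hS2e] at hcard_dec
    simp only [Finset.card_empty, Nat.cast_zero, add_zero] at hcard_dec
    have hle : ((P.filter (fun I => ε < pBad Φ I)).card : ℝ) ≤ ε * (P.card : ℝ) :=
      hcard_dec.trans hS1
    nlinarith
  · have hmark : ε * (S2.card : ℝ) < ∑ I ∈ S2, pBad Φ I := by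
      have hlt : ∑ _I ∈ S2, ε < ∑ I ∈ S2, pBad Φ I :=
        Finset.sum_lt_sum_of_nonempty hS2e fun I hI => (Finset.mem_filter.1 hI).2.1
      rw [Finset.sum_const, nsmul_eq_mul] at hlt
      calc ε * (S2.card : ℝ) = (S2.card : ℝ) * ε := by ring
        _ < ∑ I ∈ S2, pBad Φ I := hlt
    have hchain : ∑ I ∈ S2, pBad Φ I ≤ 2 * ε ^ 2 * (P.card : ℝ) := by
      calc ∑ I ∈ S2, pBad Φ I
          ≤ ∑ I ∈ S2, 2 * ∑ i ∈ (univ : Finset (Fin N)).filter (· ∉ I),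
              Real.exp (-(1 - δ) ^ 2 / (8 * sincSq Φ I i)) :=
            Finset.sum_le_sum hpBad2
        _ = 2 * ∑ I ∈ S2, ∑ i ∈ (univ : Finset (Fin N)).filter (· ∉ I),
              Real.exp (-(1 - δ) ^ 2 / (8 * sincSq Φ I i)) := by
            rw [Finset.mul_sum]
        _ ≤ 2 * WSsum := by linarith [hsum2]
        _ ≤ 2 * ε ^ 2 * (P.card : ℝ) := by linarith [hWSsum_le]
    have hS2card : (S2.card : ℝ) < 2 * ε * (P.card : ℝ) := by
      have h1 : ε * (S2.card : ℝ) < ε * (2 * ε * (P.card : ℝ)) := by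
        calc ε * (S2.card : ℝ) < ∑ I ∈ S2, pBad Φ I := hmark
          _ ≤ 2 * ε ^ 2 * (P.card : ℝ) := hchain
          _ = ε * (2 * ε * (P.card : ℝ)) := by ring
      exact lt_of_mul_lt_mul_left h1 hε0.le
    calc ((P.filter (fun I => ε < pBad Φ I)).card : ℝ)
        ≤ ((P.filter (fun I => ¬ specNorm (gram Φ I - 1) ≤ δ)).card : ℝ)
          + (S2.card : ℝ) := hcard_dec
      _ < ε * (P.card : ℝ) + 2 * ε * (P.card : ℝ) := by linarith
      _ = 3 * ε * (P.card : ℝ) := by ring
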